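/- (Proposition 7, edge-level form) Under the two-stage cluster design with cluster in-experiment probability p and treatment probability π, the expectation of the Horvitz–Thompson estimator built from the diffusion metric D satisfies E[τ̂²_c(p,π)] = (1/n) Σ_{i ≠ j} (β_{i,j} + κ_{i,j} ζ_{i,j}), where κ_{i,j} = π if units i and j belong to the same cluster and κ_{i,j} = pπ otherwise. -/

import Mathlib

open Finset

noncomputable section

/-- Real-valued indicator of a Boolean. -/
def ind (b : Bool) : ℝ := if b then 1 else 0

/-- Dyadic linear potential-outcome model for an ordered pair `(i, j)`:
`z_{i,j}(W) = α_{i,j} + β_{i,j} W_i + γ_{i,j} W_j + ζ_{i,j} W_i W_j`. -/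
def zDyad {n : ℕ} (α β γ ζ : Fin n → Fin n → ℝ) (W : Fin n → ℝ) (i j : Fin n) : ℝ :=
  α i j + β i j * W i + γ i j * W j + ζ i j * W i * W j

/-- Upstream-aggregated outcome `Y_j(W) = Σ_{i ≠ j} z_{i,j}(W)`. -/
def Yagg {n : ℕ} (α β γ ζ : Fin n → Fin n → ℝ) (W : Fin n → ℝ) (j : Fin n) : ℝ :=
  ∑ i ∈ ({j}ᶜ : Finset (Fin n)), zDyad α β γ ζ W i j

/-- Downstream-aggregated outcome (diffusion metric) `D_j(W) = Σ_{i ≠ j} z_{j,i}(W)`. -/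
def Dagg {n : ℕ} (α β γ ζ : Fin n → Fin n → ℝ) (W : Fin n → ℝ) (j : Fin n) : ℝ :=
  ∑ i ∈ ({j}ᶜ : Finset (Fin n)), zDyad α β γ ζ W j i

/-- Expectation over the two-stage cluster design: `b ∈ {0,1}^C` are i.i.d.
Bernoulli(`p`) cluster in-experiment indicators and `u ∈ {0,1}^n` are i.i.d.
Bernoulli(`q`) treatment coins, all mutually independent. -/
def expectBU (n : ℕ) {C : Type} [Fintype C] [DecidableEq C] (p q : ℝ)
    (f : (C → Bool) → (Fin n → Bool) → ℝ) : ℝ :=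
  ∑ b : C → Bool, ∑ u : Fin n → Bool,
    (∏ k, if b k then p else 1 - p) * (∏ i, if u i then q else 1 - q) * f b u

/-- Realized treatment in the two-stage cluster design: `V_i = B_{c(i)}`,
`W_i = V_i U_i` (units outside the experiment receive control). -/
def treatBU {n : ℕ} {C : Type} (c : Fin n → C) (b : C → Bool) (u : Fin n → Bool) :
    Fin n → ℝ :=
  fun i => ind (b (c i) && u i)

/-- Horvitz–Thompson estimator built from `Y` in the two-stage cluster design:
`τ̂¹_c(p,q)(b,u) = (1/n) Σ_i [V_i W_i Y_i(W)/(pq) − V_i (1 − W_i) Y_i(W)/(p(1 − q))]`. -/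
def tauHat1Clu {n : ℕ} {C : Type} (α β γ ζ : Fin n → Fin n → ℝ) (c : Fin n → C)
    (p q : ℝ) (b : C → Bool) (u : Fin n → Bool) : ℝ :=
  (1 / (n : ℝ)) * ∑ i,
    (ind (b (c i)) * treatBU c b u i * Yagg α β γ ζ (treatBU c b u) i / (p * q) -
      ind (b (c i)) * (1 - treatBU c b u i) * Yagg α β γ ζ (treatBU c b u) i /
        (p * (1 - q)))

/-- Horvitz–Thompson estimator built from `D` in the two-stage cluster design. -/
def tauHat2Clu {n : ℕ} {C : Type} (α β γ ζ : Fin n → Fin n → ℝ) (c : Fin n → C)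
    (p q : ℝ) (b : C → Bool) (u : Fin n → Bool) : ℝ :=
  (1 / (n : ℝ)) * ∑ i,
    (ind (b (c i)) * treatBU c b u i * Dagg α β γ ζ (treatBU c b u) i / (p * q) -
      ind (b (c i)) * (1 - treatBU c b u i) * Dagg α β γ ζ (treatBU c b u) i /
        (p * (1 - q)))

section Marg

variable {ι : Type*} [Fintype ι] [DecidableEq ι]

/-- delta function -/
def dd (a z : Bool) : ℝ := if z = a then 1 else 0

lemma sum_pi_prod (g : ι → Bool → ℝ) :
    ∑ b : ι → Bool, ∏ k, g k (b k) = ∏ k, ∑ x : Bool, g k x :=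
  (Fintype.prod_sum _).symm

lemma marg1 (w : Bool → ℝ) (hw : ∑ x : Bool, w x = 1) (k0 : ι) (f : Bool → ℝ) :
    ∑ b : ι → Bool, (∏ k, w (b k)) * f (b k0)
      = ∑ x : Bool, w x * f x := by
  have key : ∀ b : ι → Bool, (∏ k, w (b k)) * f (b k0)
      = ∑ x : Bool, (∏ k, w (b k) * (if k = k0 then dd x (b k) else 1)) * f x := by
    intro b
    have hprod : ∀ x : Bool,
        (∏ k, w (b k) * (if k = k0 then dd x (b k) else 1))
          = (∏ k, w (b k)) * dd x (b k0) := by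
      intro x
      rw [Finset.prod_mul_distrib, Fintype.prod_ite_eq' k0 (fun k => dd x (b k))]
    simp only [hprod]
    cases h : b k0 <;> simp [dd, Fintype.sum_bool, h]
  simp only [key]
  rw [Finset.sum_comm]
  refine Finset.sum_congr rfl fun x _ => ?_
  rw [← Finset.sum_mul, sum_pi_prod (fun k z => w z * (if k = k0 then dd x z else 1))]
  congr 1
  have : ∀ k : ι, (∑ z : Bool, w z * (if k = k0 then dd x z else 1))
      = if k = k0 then w x else 1 := by
    intro k
    by_cases h : k = k0 <;> cases x <;> simp [h, dd, Fintype.sum_bool, hw] <;>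
      simpa [Fintype.sum_bool] using hw
  simp only [this, Fintype.prod_ite_eq' k0 (fun _ => w x)]

lemma marg2 (w : Bool → ℝ) (hw : ∑ x : Bool, w x = 1) {k0 k1 : ι} (hk : k0 ≠ k1)
    (f : Bool → Bool → ℝ) :
    ∑ b : ι → Bool, (∏ k, w (b k)) * f (b k0) (b k1)
      = ∑ x : Bool, ∑ y : Bool, w x * w y * f x y := by
  have key : ∀ b : ι → Bool, (∏ k, w (b k)) * f (b k0) (b k1)
      = ∑ x : Bool, ∑ y : Bool,
          (∏ k, w (b k) * ((if k = k0 then dd x (b k) else 1) *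
            (if k = k1 then dd y (b k) else 1))) * f x y := by
    intro b
    have hprod : ∀ x y : Bool,
        (∏ k, w (b k) * ((if k = k0 then dd x (b k) else 1) *
            (if k = k1 then dd y (b k) else 1)))
          = (∏ k, w (b k)) * (dd x (b k0) * dd y (b k1)) := by
      intro x y
      rw [Finset.prod_mul_distrib, Finset.prod_mul_distrib,
        Fintype.prod_ite_eq' k0 (fun k => dd x (b k)),
        Fintype.prod_ite_eq' k1 (fun k => dd y (b k))]
    simp only [hprod]
    cases h0 : b k0 <;> cases h1 : b k1 <;>
      simp [dd, Fintype.sum_bool, h0, h1]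
  simp only [key]
  rw [Finset.sum_comm]
  refine Finset.sum_congr rfl fun x _ => ?_
  rw [Finset.sum_comm]
  refine Finset.sum_congr rfl fun y _ => ?_
  rw [← Finset.sum_mul, sum_pi_prod (fun k z => w z * ((if k = k0 then dd x z else 1) * (if k = k1 then dd y z else 1)))]
  congr 1
  have : ∀ k : ι, (∑ z : Bool, w z * ((if k = k0 then dd x z else 1) *
        (if k = k1 then dd y z else 1)))
      = (if k = k0 then w x else 1) * (if k = k1 then w y else 1) := by
    intro k
    by_cases h0 : k = k0
    · have h1 : k ≠ k1 := h0 ▸ hk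
      cases x <;> simp [h0, h1, hk, dd, Fintype.sum_bool]
    · by_cases h1 : k = k1
      · cases y <;> simp [h0, h1, Ne.symm hk, dd, Fintype.sum_bool]
      · simpa [h0, h1, Fintype.sum_bool] using hw
  rw [Finset.prod_congr rfl (fun k _ => this k), Finset.prod_mul_distrib,
    Fintype.prod_ite_eq' k0 (fun _ => w x), Fintype.prod_ite_eq' k1 (fun _ => w y)]

end Marg

section Exp

variable {n : ℕ} {C : Type} [Fintype C] [DecidableEq C]

lemma expectBU_sum {A : Type*} (p q : ℝ) (s : Finset A)
    (f : A → (C → Bool) → (Fin n → Bool) → ℝ) :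
    expectBU n p q (fun b u => ∑ a ∈ s, f a b u)
      = ∑ a ∈ s, expectBU n p q (f a) := by
  unfold expectBU
  simp only [Finset.mul_sum]
  exact Eq.trans (Finset.sum_congr rfl fun b _ => Finset.sum_comm) Finset.sum_comm

lemma expectBU_const_mul (p q : ℝ) (r : ℝ) (f : (C → Bool) → (Fin n → Bool) → ℝ) :
    expectBU n p q (fun b u => r * f b u) = r * expectBU n p q f := by
  unfold expectBU
  rw [Finset.mul_sum]
  refine Finset.sum_congr rfl fun b _ => ?_
  rw [Finset.mul_sum]
  exact Finset.sum_congr rfl fun u _ => by ring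

lemma expectBU_local_eq (p q : ℝ) (k0 : C) {i j : Fin n} (hij : i ≠ j)
    (G : Bool → Bool → Bool → ℝ) :
    expectBU n p q (fun b u => G (b k0) (u i) (u j))
      = ∑ s : Bool, ∑ t : Bool, ∑ x : Bool,
          ((if s then q else 1 - q) * (if t then q else 1 - q)) *
            ((if x then p else 1 - p) * G x s t) := by
  have hwq : ∑ z : Bool, (if z then q else 1 - q) = 1 := by
    rw [Fintype.sum_bool]; ring_nf; simp
  have hwp : ∑ z : Bool, (if z then p else 1 - p) = 1 := by
    rw [Fintype.sum_bool]; ring_nf; simp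
  unfold expectBU
  have step1 : ∀ b : C → Bool,
      ∑ u : Fin n → Bool, (∏ k, if b k then p else 1 - p) *
          (∏ i', if u i' then q else 1 - q) * G (b k0) (u i) (u j)
        = (∏ k, if b k then p else 1 - p) *
            ∑ s : Bool, ∑ t : Bool,
              (if s then q else 1 - q) * (if t then q else 1 - q) * G (b k0) s t := by
    intro b
    rw [← marg2 (fun z => if z then q else 1 - q) hwq hij (fun s t => G (b k0) s t),
      Finset.mul_sum]
    exact Finset.sum_congr rfl fun u _ => by ring
  simp only [step1]
  simp only [Finset.mul_sum]
  rw [Finset.sum_comm]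
  refine Finset.sum_congr rfl fun s _ => ?_
  rw [Finset.sum_comm]
  refine Finset.sum_congr rfl fun t _ => ?_
  have h := marg1 (fun z => if z then p else 1 - p) hwp k0 (fun x => G x s t)
  have hpull : ∑ b : C → Bool, (∏ k, if b k then p else 1 - p) *
      (((if s then q else 1 - q) * (if t then q else 1 - q)) * G (b k0) s t)
      = ((if s then q else 1 - q) * (if t then q else 1 - q)) *
          ∑ b : C → Bool, (∏ k, if b k then p else 1 - p) * G (b k0) s t := by
    rw [Finset.mul_sum]; exact Finset.sum_congr rfl fun b _ => by ring
  rw [hpull, h, Finset.mul_sum]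

lemma expectBU_local_ne (p q : ℝ) {k0 k1 : C} (hk : k0 ≠ k1)
    {i j : Fin n} (hij : i ≠ j) (F : Bool → Bool → Bool → Bool → ℝ) :
    expectBU n p q (fun b u => F (b k0) (b k1) (u i) (u j))
      = ∑ s : Bool, ∑ t : Bool, ∑ x : Bool, ∑ y : Bool,
          ((if s then q else 1 - q) * (if t then q else 1 - q)) *
            ((if x then p else 1 - p) * (if y then p else 1 - p) * F x y s t) := by
  have hwq : ∑ z : Bool, (if z then q else 1 - q) = 1 := by
    rw [Fintype.sum_bool]; ring_nf; simp
  have hwp : ∑ z : Bool, (if z then p else 1 - p) = 1 := by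
    rw [Fintype.sum_bool]; ring_nf; simp
  unfold expectBU
  have step1 : ∀ b : C → Bool,
      ∑ u : Fin n → Bool, (∏ k, if b k then p else 1 - p) *
          (∏ i', if u i' then q else 1 - q) * F (b k0) (b k1) (u i) (u j)
        = (∏ k, if b k then p else 1 - p) *
            ∑ s : Bool, ∑ t : Bool,
              (if s then q else 1 - q) * (if t then q else 1 - q) *
                F (b k0) (b k1) s t := by
    intro b
    rw [← marg2 (fun z => if z then q else 1 - q) hwq hij
        (fun s t => F (b k0) (b k1) s t), Finset.mul_sum]
    exact Finset.sum_congr rfl fun u _ => by ring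
  simp only [step1]
  simp only [Finset.mul_sum]
  rw [Finset.sum_comm]
  refine Finset.sum_congr rfl fun s _ => ?_
  rw [Finset.sum_comm]
  refine Finset.sum_congr rfl fun t _ => ?_
  have h := marg2 (fun z => if z then p else 1 - p) hwp hk (fun x y => F x y s t)
  have hpull : ∑ b : C → Bool, (∏ k, if b k then p else 1 - p) *
      (((if s then q else 1 - q) * (if t then q else 1 - q)) * F (b k0) (b k1) s t)
      = ((if s then q else 1 - q) * (if t then q else 1 - q)) *
          ∑ b : C → Bool, (∏ k, if b k then p else 1 - p) * F (b k0) (b k1) s t := by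
    rw [Finset.mul_sum]; exact Finset.sum_congr rfl fun b _ => by ring
  rw [hpull, h]
  simp only [Finset.mul_sum]

end Exp



def pairT {n : ℕ} {C : Type} (α β γ ζ : Fin n → Fin n → ℝ) (c : Fin n → C)
    (p q : ℝ) (i j : Fin n) (b : C → Bool) (u : Fin n → Bool) : ℝ :=
  ind (b (c i)) * treatBU c b u i * zDyad α β γ ζ (treatBU c b u) i j / (p * q) -
    ind (b (c i)) * (1 - treatBU c b u i) * zDyad α β γ ζ (treatBU c b u) i j /
      (p * (1 - q))

lemma expect_pairT {n : ℕ} (α β γ ζ : Fin n → Fin n → ℝ)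
    {C : Type} [Fintype C] [DecidableEq C] (c : Fin n → C)
    {p q : ℝ} (hp0 : 0 < p) (hq0 : 0 < q) (hq1 : q < 1)
    {i j : Fin n} (hij : i ≠ j) :
    expectBU n p q (pairT α β γ ζ c p q i j)
      = β i j + (if c i = c j then q else p * q) * ζ i j := by
  have hpne : p ≠ 0 := hp0.ne'
  have hqne : q ≠ 0 := hq0.ne'
  have h1q : (1 : ℝ) - q ≠ 0 := by intro h; exact absurd (by linarith : q = 1) hq1.ne
  by_cases hc : c i = c j
  · set G : Bool → Bool → Bool → ℝ := (fun x s t : Bool =>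
          ind x * ind (x && s) * (α i j + β i j * ind (x && s) + γ i j * ind (x && t)
            + ζ i j * ind (x && s) * ind (x && t)) / (p * q) -
          ind x * (1 - ind (x && s)) * (α i j + β i j * ind (x && s) + γ i j * ind (x && t)
            + ζ i j * ind (x && s) * ind (x && t)) / (p * (1 - q))) with hG
    have hrep : pairT α β γ ζ c p q i j = fun b u => G (b (c j)) (u i) (u j) := by
      funext b u
      simp only [hG, pairT, zDyad, treatBU, hc]
    rw [hrep, expectBU_local_eq p q (c j) hij G, if_pos hc]
    simp only [hG]
    simp only [Fintype.sum_bool, ind, Bool.and_self, Bool.true_and, Bool.false_and,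
      Bool.and_true, Bool.and_false, if_true, if_false, Bool.false_eq_true, ↓reduceIte]
    field_simp
    ring
  · set F : Bool → Bool → Bool → Bool → ℝ := (fun x y s t : Bool =>
          ind x * ind (x && s) * (α i j + β i j * ind (x && s) + γ i j * ind (y && t)
            + ζ i j * ind (x && s) * ind (y && t)) / (p * q) -
          ind x * (1 - ind (x && s)) * (α i j + β i j * ind (x && s) + γ i j * ind (y && t)
            + ζ i j * ind (x && s) * ind (y && t)) / (p * (1 - q))) with hF
    have hrep : pairT α β γ ζ c p q i j = fun b u => F (b (c i)) (b (c j)) (u i) (u j) := by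
      funext b u
      simp only [hF, pairT, zDyad, treatBU]
    rw [hrep, expectBU_local_ne p q hc hij F, if_neg hc]
    simp only [hF]
    simp only [Fintype.sum_bool, ind, Bool.and_self, Bool.true_and, Bool.false_and,
      Bool.and_true, Bool.and_false, if_true, if_false, Bool.false_eq_true, ↓reduceIte]
    field_simp
    ring

/-- Proposition 7, edge-level form: Under the two-stage cluster design
with cluster in-experiment probability `p` and treatment probability `q`,
`E[τ̂²_c(p,q)] = (1/n) Σ_{i ≠ j} (β_{i,j} + κ_{i,j} ζ_{i,j})`, where `κ_{i,j} = q` if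
`i` and `j` are in the same cluster and `κ_{i,j} = pq` otherwise. -/
theorem expect_tauHat2Clu
    (n : ℕ) (hn : 1 ≤ n) (α β γ ζ : Fin n → Fin n → ℝ)
    (C : Type) [Fintype C] [DecidableEq C] (c : Fin n → C)
    (p q : ℝ) (hp0 : 0 < p) (hp1 : p ≤ 1) (hq0 : 0 < q) (hq1 : q < 1) :
    expectBU n p q (tauHat2Clu α β γ ζ c p q) =
      (1 / (n : ℝ)) * ∑ j, ∑ i ∈ ({j}ᶜ : Finset (Fin n)),
        (β i j + (if c i = c j then q else p * q) * ζ i j) := by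
  have h1 : ∀ (b : C → Bool) (u : Fin n → Bool),
      tauHat2Clu α β γ ζ c p q b u
        = ∑ i : Fin n, ∑ j ∈ ({i}ᶜ : Finset (Fin n)),
            (1 / (n : ℝ)) * pairT α β γ ζ c p q i j b u := by
    intro b u
    simp only [tauHat2Clu, Dagg, pairT, Finset.mul_sum, Finset.sum_div,
      ← Finset.sum_sub_distrib]
  have h2 : expectBU n p q (tauHat2Clu α β γ ζ c p q)
      = ∑ i : Fin n, ∑ j ∈ ({i}ᶜ : Finset (Fin n)),
          (1 / (n : ℝ)) * (β i j + (if c i = c j then q else p * q) * ζ i j) := by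
    have hrw : expectBU n p q (tauHat2Clu α β γ ζ c p q)
        = expectBU n p q (fun b u => ∑ i : Fin n, ∑ j ∈ ({i}ᶜ : Finset (Fin n)),
            (1 / (n : ℝ)) * pairT α β γ ζ c p q i j b u) := by
      congr 1
      funext b u
      exact h1 b u
    rw [hrw, expectBU_sum]
    refine Finset.sum_congr rfl fun i _ => ?_
    rw [expectBU_sum]
    refine Finset.sum_congr rfl fun j hj => ?_
    have hij : i ≠ j := by
      simp only [Finset.mem_compl, Finset.mem_singleton] at hj
      exact fun h => hj h.symm
    rw [expectBU_const_mul, expect_pairT α β γ ζ c hp0 hq0 hq1 hij]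
  have hcomm : ∀ (x y : Fin n), x ∈ (univ : Finset (Fin n)) ∧ y ∈ ({x}ᶜ : Finset (Fin n))
      ↔ x ∈ ({y}ᶜ : Finset (Fin n)) ∧ y ∈ (univ : Finset (Fin n)) := by
    intro x y
    simp only [Finset.mem_univ, Finset.mem_compl, Finset.mem_singleton, true_and, and_true]
    exact ne_comm
  rw [h2]
  simp only [Finset.mul_sum]
  exact Finset.sum_comm' hcomm
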